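/- Let H be a Hermitian matrix and P a permutation matrix such that H = Pᵀ H P and P eᵤ = eᵥ. Then u and v are cospectral with respect to H, i.e., (Eⱼ)ᵤᵤ = (Eⱼ)ᵥᵥ for every spectral projection Eⱼ of H. -/
import Mathlib


open Matrix

theorem stmt4 {m r : ℕ} (H : Matrix (Fin m) (Fin m) ℂ)
    (lam : Fin r → ℝ) (E : Fin r → Matrix (Fin m) (Fin m) ℂ)
    (hH : H.IsHermitian)
    (hlam : Function.Injective lam)
    (hEherm : ∀ j, (E j).IsHermitian)
    (hEidem : ∀ j, E j * E j = E j)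
    (hEorth : ∀ j k, j ≠ k → E j * E k = 0)
    (hEsum : ∑ j, E j = 1)
    (hEnz : ∀ j, E j ≠ 0)
    (hspec : H = ∑ j, (lam j : ℂ) • E j)
    (u v : Fin m) (σ : Equiv.Perm (Fin m)) (P : Matrix (Fin m) (Fin m) ℂ)
    (hP : ∀ i j, P i j = if σ i = j then 1 else 0)
    (hHP : H = Pᵀ * H * P)
    (hPu : P *ᵥ (Pi.single u 1 : Fin m → ℂ) = Pi.single v 1) :
    ∀ j, (E j) u u = (E j) v v := by
  classical
  have hPPt : P * Pᵀ = 1 := by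
    ext i j
    simp [mul_apply, hP, ite_and, Finset.sum_ite_eq, Equiv.apply_eq_iff_eq,
      one_apply, eq_comm, ite_mul, mul_ite]
  have hPtP : Pᵀ * P = 1 := mul_eq_one_comm.mp hPPt
  have hconj : ∀ (A : Matrix (Fin m) (Fin m) ℂ) (x y : Fin m),
      (P * A * Pᵀ) x y = A (σ x) (σ y) := by
    intro A x y
    simp [mul_apply, hP, ite_mul, mul_ite, Finset.sum_ite_eq]
  have hσv : σ v = u := by
    have := congrFun hPu v
    simp [mulVec, dotProduct, hP, ite_mul, Finset.sum_ite_eq, Pi.single_apply] at this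
    by_contra h
    simp [h] at this
  set F : Fin r → Matrix (Fin m) (Fin m) ℂ := fun j => P * E j * Pᵀ with hF
  have key : ∀ A B : Matrix (Fin m) (Fin m) ℂ,
      (P * A * Pᵀ) * (P * B * Pᵀ) = P * (A * B) * Pᵀ := by
    intro A B
    simp only [Matrix.mul_assoc]
    rw [← Matrix.mul_assoc Pᵀ P, hPtP, one_mul]
  have hHP' : P * H * Pᵀ = H := by
    conv_lhs => rw [hHP]
    simp only [Matrix.mul_assoc]
    rw [← Matrix.mul_assoc P Pᵀ, hPPt, one_mul, mul_one]
  have hFsum : ∑ j, F j = 1 := by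
    simp only [hF]
    rw [← Finset.sum_mul, ← Finset.mul_sum, hEsum, mul_one, hPPt]
  have hHF : H = ∑ j, (lam j : ℂ) • F j := by
    conv_lhs => rw [← hHP', hspec]
    rw [Finset.mul_sum, Finset.sum_mul]
    refine Finset.sum_congr rfl fun j _ => ?_
    rw [mul_smul_comm, smul_mul_assoc]
  have hForth : ∀ j k, j ≠ k → F j * F k = 0 := by
    intro j k hjk
    simp only [hF]
    rw [key, hEorth j k hjk, Matrix.mul_zero, Matrix.zero_mul]
  have hFidem : ∀ j, F j * F j = F j := by
    intro j
    simp only [hF]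
    rw [key, hEidem]
  have hEH : ∀ j, E j * H = (lam j : ℂ) • E j := by
    intro j
    rw [hspec, Finset.mul_sum]
    rw [Finset.sum_eq_single j]
    · rw [mul_smul_comm, hEidem]
    · intro k _ hk
      rw [mul_smul_comm, hEorth j k (Ne.symm hk), smul_zero]
    · intro h; exact absurd (Finset.mem_univ j) h
  have hHF' : ∀ k, H * F k = (lam k : ℂ) • F k := by
    intro k
    rw [hHF, Finset.sum_mul]
    rw [Finset.sum_eq_single k]
    · rw [smul_mul_assoc, hFidem]
    · intro j _ hj
      rw [smul_mul_assoc, hForth j k hj, smul_zero]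
    · intro h; exact absurd (Finset.mem_univ k) h
  have hEF : ∀ j k, j ≠ k → E j * F k = 0 := by
    intro j k hjk
    have h1 : E j * H * F k = (lam k : ℂ) • (E j * F k) := by
      rw [Matrix.mul_assoc, hHF' k, mul_smul_comm]
    have h2 : E j * H * F k = (lam j : ℂ) • (E j * F k) := by
      rw [hEH j, smul_mul_assoc]
    have h3 : ((lam j : ℂ) - (lam k : ℂ)) • (E j * F k) = 0 := by
      rw [sub_smul, ← h1, ← h2, sub_self]
    rcases smul_eq_zero.mp h3 with h | h
    · exfalso
      apply hjk
      apply hlam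
      have : (lam j : ℂ) = (lam k : ℂ) := sub_eq_zero.mp h
      exact_mod_cast this
    · exact h
  have hEeqF : ∀ k, E k = F k := by
    intro k
    have a : F k = E k * F k := by
      conv_lhs => rw [← one_mul (F k), ← hEsum, Finset.sum_mul]
      rw [Finset.sum_eq_single k]
      · intro j _ hj; exact hEF j k hj
      · intro h; exact absurd (Finset.mem_univ k) h
    have b : E k = E k * F k := by
      conv_lhs => rw [← mul_one (E k), ← hFsum, Finset.mul_sum]
      rw [Finset.sum_eq_single k]
      · intro j _ hj; exact hEF k j (Ne.symm hj)
      · intro h; exact absurd (Finset.mem_univ k) h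
    rw [b, ← a]
  intro j
  have := congrFun (congrFun (hEeqF j) v) v
  rw [this, hF]
  simp only
  rw [hconj, hσv]
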